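/- Let s ≥ 3 and let H be a graph in which every copy of K_s contains two fixed adjacent vertices u and v, and suppose every vertex of H other than u,v lies in some copy of K_s. If t is the number of copies of K_s in H, then t ≤ ((|V(H)|−2)/(s−2))^{s−2}. -/

import Mathlib

open Finset

lemma amgm {ι : Type*} (T : Finset ι) (x : ι → ℝ) (hx : ∀ i ∈ T, 0 ≤ x i)
    (r : ℕ) (hr : 0 < r) (hT : T.card = r) :
    ∏ i ∈ T, x i ≤ ((∑ i ∈ T, x i) / r) ^ r := by
  have hr' : (r : ℝ) ≠ 0 := by positivity
  have h := Real.geom_mean_le_arith_mean_weighted T (fun _ => (r:ℝ)⁻¹) x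
    (fun i _ => by positivity) (by simp [hT]; field_simp) hx
  have h2 := pow_le_pow_left₀ (Finset.prod_nonneg fun i hi => Real.rpow_nonneg (hx i hi) _) h r
  calc ∏ i ∈ T, x i = (∏ i ∈ T, x i ^ ((r:ℝ)⁻¹)) ^ r := by
        rw [← Finset.prod_pow]
        refine Finset.prod_congr rfl fun i hi => ?_
        rw [← Real.rpow_natCast (x i ^ ((r:ℝ)⁻¹)) r, ← Real.rpow_mul (hx i hi),
          inv_mul_cancel₀ hr', Real.rpow_one]
    _ ≤ (∑ i ∈ T, (r:ℝ)⁻¹ * x i) ^ r := h2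
    _ = ((∑ i ∈ T, x i) / r) ^ r := by rw [← Finset.mul_sum]; ring_nf

lemma shift_eq {V : Type*} [Fintype V] [DecidableEq V] (G : SimpleGraph V) [DecidableRel G.Adj]
    (r : ℕ) (x : V → ℝ) (a b : V) (hab : a ≠ b) (hnadj : ¬ G.Adj a b) :
    ∑ S ∈ G.cliqueFinset r, ∏ v ∈ S, (Function.update (Function.update x b 0) a (x a + x b)) v
    = ∑ S ∈ G.cliqueFinset r, ∏ v ∈ S, x v
      + x b * ((∑ S ∈ (G.cliqueFinset r).filter (fun S => a ∈ S), ∏ v ∈ S.erase a, x v)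
             - (∑ S ∈ (G.cliqueFinset r).filter (fun S => b ∈ S), ∏ v ∈ S.erase b, x v)) := by
  classical
  set x' := Function.update (Function.update x b 0) a (x a + x b) with hx'
  have hx'a : x' a = x a + x b := by simp [hx']
  have hx'b : x' b = 0 := by simp [hx', Function.update_of_ne hab.symm]
  have hx'o : ∀ v, v ≠ a → v ≠ b → x' v = x v := by
    intro v h1 h2; simp [hx', Function.update_of_ne h1, Function.update_of_ne h2]
  have hnot : ∀ S ∈ G.cliqueFinset r, a ∈ S → b ∉ S := by
    intro S hS ha hb
    exact hnadj (((SimpleGraph.mem_cliqueFinset_iff).1 hS).isClique ha hb hab)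
  have split : ∀ (y : V → ℝ), ∑ S ∈ G.cliqueFinset r, ∏ v ∈ S, y v
      = (∑ S ∈ (G.cliqueFinset r).filter (fun S => a ∈ S), ∏ v ∈ S, y v)
      + (∑ S ∈ (G.cliqueFinset r).filter (fun S => b ∈ S), ∏ v ∈ S, y v)
      + (∑ S ∈ (G.cliqueFinset r).filter (fun S => a ∉ S ∧ b ∉ S), ∏ v ∈ S, y v) := by
    intro y
    have h1 := Finset.sum_filter_add_sum_filter_not (G.cliqueFinset r) (fun S => a ∈ S)
      (fun S => ∏ v ∈ S, y v)
    have h2 := Finset.sum_filter_add_sum_filter_not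
      ((G.cliqueFinset r).filter (fun S => ¬ a ∈ S)) (fun S => b ∈ S)
      (fun S => ∏ v ∈ S, y v)
    rw [Finset.filter_filter, Finset.filter_filter] at h2
    have e1 : ((G.cliqueFinset r).filter fun S => ¬ a ∈ S ∧ b ∈ S)
        = (G.cliqueFinset r).filter (fun S => b ∈ S) := by
      apply Finset.filter_congr; intro S hS
      exact ⟨fun h => h.2, fun h => ⟨fun ha => hnot S hS ha h, h⟩⟩
    have e2 : ((G.cliqueFinset r).filter fun S => ¬ a ∈ S ∧ ¬ b ∈ S)
        = (G.cliqueFinset r).filter (fun S => a ∉ S ∧ b ∉ S) := rfl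
    rw [e1, e2] at h2
    linarith
  -- products on each part
  have pa : ∀ (y : V → ℝ), ∀ S ∈ (G.cliqueFinset r).filter (fun S => a ∈ S),
      ∏ v ∈ S, y v = y a * ∏ v ∈ S.erase a, y v := by
    intro y S hS
    exact (Finset.mul_prod_erase S y (Finset.mem_filter.1 hS).2).symm
  have pb : ∀ (y : V → ℝ), ∀ S ∈ (G.cliqueFinset r).filter (fun S => b ∈ S),
      ∏ v ∈ S, y v = y b * ∏ v ∈ S.erase b, y v := by
    intro y S hS
    exact (Finset.mul_prod_erase S y (Finset.mem_filter.1 hS).2).symm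
  -- erased products agree between x and x'
  have ea : ∀ S ∈ (G.cliqueFinset r).filter (fun S => a ∈ S),
      ∏ v ∈ S.erase a, x' v = ∏ v ∈ S.erase a, x v := by
    intro S hS
    refine Finset.prod_congr rfl fun v hv => ?_
    have hva : v ≠ a := (Finset.mem_erase.1 hv).1
    have hvb : v ≠ b := by
      intro h; subst h
      exact hnot S (Finset.mem_filter.1 hS).1 (Finset.mem_filter.1 hS).2
        (Finset.mem_of_mem_erase hv)
    exact hx'o v hva hvb
  have enone : ∀ S ∈ (G.cliqueFinset r).filter (fun S => a ∉ S ∧ b ∉ S),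
      ∏ v ∈ S, x' v = ∏ v ∈ S, x v := by
    intro S hS
    refine Finset.prod_congr rfl fun v hv => ?_
    obtain ⟨-, h1, h2⟩ := Finset.mem_filter.1 hS
    exact hx'o v (fun h => h1 (h ▸ hv)) (fun h => h2 (h ▸ hv))
  rw [split x', split x]
  rw [Finset.sum_congr rfl (pa x'), Finset.sum_congr rfl (pb x'),
    Finset.sum_congr rfl (enone), Finset.sum_congr rfl (pa x), Finset.sum_congr rfl (pb x)]
  simp only [hx'a, hx'b, zero_mul, Finset.sum_const_zero]
  rw [Finset.sum_congr rfl (fun S hS => by rw [ea S hS])]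
  rw [← Finset.mul_sum, ← Finset.mul_sum, ← Finset.mul_sum]
  ring

lemma core{V : Type*} [Fintype V] [DecidableEq V] (G : SimpleGraph V) [DecidableRel G.Adj]
    (r : ℕ) (hr : 0 < r) (hG : G.CliqueFree (r + 1)) :
    ∀ (n : ℕ) (x : V → ℝ), (∀ v, 0 ≤ x v) →
      (Finset.univ.filter (fun v => x v ≠ 0)).card ≤ n →
      ∑ S ∈ G.cliqueFinset r, ∏ v ∈ S, x v ≤ ((∑ v, x v) / r) ^ r := by
  intro n
  induction n with
  | zero =>
    intro x hx hcard
    have hall : ∀ v, x v = 0 := by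
      intro v
      by_contra h
      have : v ∈ Finset.univ.filter (fun v => x v ≠ 0) := by simp [h]
      simp [Finset.card_eq_zero.1 (Nat.le_zero.1 hcard)] at this
    have h1 : ∑ S ∈ G.cliqueFinset r, ∏ v ∈ S, x v = 0 := by
      refine Finset.sum_eq_zero fun S hS => ?_
      have hSc : S.card = r := ((SimpleGraph.mem_cliqueFinset_iff).1 hS).card_eq
      obtain ⟨w, hw⟩ := Finset.card_pos.1 (hSc ▸ hr)
      exact Finset.prod_eq_zero hw (hall w)
    rw [h1]
    have h2 : (∑ v, x v) = 0 := Finset.sum_eq_zero fun v _ => hall v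
    rw [h2]
    simp [zero_pow hr.ne']
  | succ n ih =>
    intro x hx hcard
    set T := Finset.univ.filter (fun v => x v ≠ 0) with hT
    by_cases hclique : G.IsClique (T : Set V)
    · -- support is a clique; at most one clique has nonzero product
      have hTr : T.card ≤ r := by
        by_contra h
        push_neg at h
        obtain ⟨T', hT'sub, hT'c⟩ := Finset.exists_subset_card_eq (show r + 1 ≤ T.card from h)
        exact hG T' ⟨hclique.subset (Finset.coe_subset.2 hT'sub), hT'c⟩
      have hsub : ∀ S ∈ G.cliqueFinset r, (∏ v ∈ S, x v) ≠ 0 → S = T := by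
        intro S hS hne
        have hST : S ⊆ T := by
          intro w hw
          simp only [hT, Finset.mem_filter, Finset.mem_univ, true_and]
          exact fun h0 => hne (Finset.prod_eq_zero hw h0)
        exact (Finset.eq_of_subset_of_card_le hST
          (by rw [((SimpleGraph.mem_cliqueFinset_iff).1 hS).card_eq]; exact hTr))
      have e1 : ∑ S ∈ G.cliqueFinset r, ∏ v ∈ S, x v
          = ∑ S ∈ (G.cliqueFinset r).filter (fun S => S = T), ∏ v ∈ S, x v :=
        (Finset.sum_filter_of_ne hsub).symm
      have e2 : ∑ S ∈ (G.cliqueFinset r).filter (fun S => S = T), ∏ v ∈ S, x v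
          ≤ ∏ v ∈ T, x v := by
        have hss : (G.cliqueFinset r).filter (fun S => S = T) ⊆ {T} := by
          intro S hS
          simp only [Finset.mem_singleton]
          exact (Finset.mem_filter.1 hS).2
        calc ∑ S ∈ (G.cliqueFinset r).filter (fun S => S = T), ∏ v ∈ S, x v
            ≤ ∑ S ∈ ({T} : Finset (Finset V)), ∏ v ∈ S, x v :=
              Finset.sum_le_sum_of_subset_of_nonneg hss
                (fun S _ _ => Finset.prod_nonneg fun v _ => hx v)
          _ = ∏ v ∈ T, x v := Finset.sum_singleton _ _
      rw [e1]
      by_cases hTc : T.card = r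
      · refine le_trans e2 (le_trans (amgm T x (fun i _ => hx i) r hr hTc) ?_)
        have hTs : ∑ i ∈ T, x i ≤ ∑ v, x v :=
          Finset.sum_le_sum_of_subset_of_nonneg (Finset.subset_univ T) (fun v _ _ => hx v)
        have h0 : (0:ℝ) ≤ ∑ i ∈ T, x i := Finset.sum_nonneg fun i _ => hx i
        exact pow_le_pow_left₀ (div_nonneg h0 (Nat.cast_nonneg r))
          ((div_le_div_iff_of_pos_right (by positivity)).2 hTs) r
      · have hz : ∑ S ∈ (G.cliqueFinset r).filter (fun S => S = T), ∏ v ∈ S, x v = 0 := by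
          refine Finset.sum_eq_zero fun S hS => ?_
          obtain ⟨h1, rfl⟩ := Finset.mem_filter.1 hS
          exact absurd ((SimpleGraph.mem_cliqueFinset_iff).1 h1).card_eq hTc
        rw [hz]
        exact pow_nonneg (div_nonneg (Finset.sum_nonneg fun v _ => hx v) (by positivity)) r
    · rw [SimpleGraph.isClique_iff, Set.Pairwise] at hclique
      push_neg at hclique
      obtain ⟨a, ha, b, hb, hab, hnadj⟩ := hclique
      rw [Finset.mem_coe] at ha hb
      have key : ∀ a b : V, a ∈ T → b ∈ T → a ≠ b → ¬ G.Adj a b →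
          (∑ S ∈ (G.cliqueFinset r).filter (fun S => b ∈ S), ∏ v ∈ S.erase b, x v)
          ≤ (∑ S ∈ (G.cliqueFinset r).filter (fun S => a ∈ S), ∏ v ∈ S.erase a, x v) →
          ∑ S ∈ G.cliqueFinset r, ∏ v ∈ S, x v ≤ ((∑ v, x v) / r) ^ r := by
        clear ha hb hab hnadj a b
        intro a b ha hb hab hnadj hAB
        set x' := Function.update (Function.update x b 0) a (x a + x b) with hx'def
        have hx'a : x' a = x a + x b := by simp [hx'def]
        have hx'b : x' b = 0 := by simp [hx'def, Function.update_of_ne hab.symm]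
        have hx'o : ∀ w, w ≠ a → w ≠ b → x' w = x w := by
          intro w h1 h2
          simp [hx'def, Function.update_of_ne h1, Function.update_of_ne h2]
        have hx'nn : ∀ w, 0 ≤ x' w := by
          intro w
          rcases eq_or_ne w a with rfl | h1
          · rw [hx'a]; exact add_nonneg (hx w) (hx b)
          rcases eq_or_ne w b with rfl | h2
          · rw [hx'b]
          · rw [hx'o w h1 h2]; exact hx w
        have hfle : ∑ S ∈ G.cliqueFinset r, ∏ v ∈ S, x v
            ≤ ∑ S ∈ G.cliqueFinset r, ∏ v ∈ S, x' v := by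
          rw [shift_eq G r x a b hab hnadj]
          nlinarith [mul_nonneg (hx b) (sub_nonneg.2 hAB)]
        have hsum : ∑ v, x' v = ∑ v, x v := by
          have hbmem : b ∈ Finset.univ \ {a} :=
            Finset.mem_sdiff.2 ⟨Finset.mem_univ b, by simp [hab.symm]⟩
          rw [hx'def, Finset.sum_update_of_mem (Finset.mem_univ a),
            Finset.sum_update_of_mem hbmem,
            Finset.sum_eq_add_sum_sdiff_singleton_of_mem (Finset.mem_univ a) x,
            Finset.sum_eq_add_sum_sdiff_singleton_of_mem hbmem x]
          ring
        have hsupp : (Finset.univ.filter (fun v => x' v ≠ 0)).card ≤ n := by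
          have hss : Finset.univ.filter (fun v => x' v ≠ 0) ⊆ T.erase b := by
            intro w hw
            have hw' : x' w ≠ 0 := (Finset.mem_filter.1 hw).2
            have hwb : w ≠ b := fun h => hw' (h ▸ hx'b)
            refine Finset.mem_erase.2 ⟨hwb, ?_⟩
            rcases eq_or_ne w a with rfl | h1
            · exact ha
            · rw [hT, Finset.mem_filter]
              exact ⟨Finset.mem_univ w, fun h0 => hw' (by rw [hx'o w h1 hwb]; exact h0)⟩
          have h1 := Finset.card_le_card hss
          have h2 : (T.erase b).card = T.card - 1 := Finset.card_erase_of_mem hb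
          have h3 : 0 < T.card := Finset.card_pos.2 ⟨b, hb⟩
          omega
        calc ∑ S ∈ G.cliqueFinset r, ∏ v ∈ S, x v
            ≤ ∑ S ∈ G.cliqueFinset r, ∏ v ∈ S, x' v := hfle
          _ ≤ ((∑ v, x' v) / r) ^ r := ih x' hx'nn hsupp
          _ = ((∑ v, x v) / r) ^ r := by rw [hsum]
      rcases le_total
        (∑ S ∈ (G.cliqueFinset r).filter (fun S => b ∈ S), ∏ v ∈ S.erase b, x v)
        (∑ S ∈ (G.cliqueFinset r).filter (fun S => a ∈ S), ∏ v ∈ S.erase a, x v) with h | h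
      · exact key a b ha hb hab hnadj h
      · exact key b a hb ha hab.symm (fun hadj => hnadj hadj.symm) h

/-- If every copy of `K_s` in `H` contains two fixed adjacent vertices `u, v`,
and every other vertex of `H` lies in some copy of `K_s`, then the number `t`
of copies of `K_s` satisfies `t ≤ ((|V(H)| - 2)/(s - 2))^(s-2)`. -/
theorem stmt_19 {V : Type*} [Fintype V] (s : ℕ) (hs : 3 ≤ s)
    (H : SimpleGraph V) (u v : V) (huv : H.Adj u v)
    (hcover : ∀ S : Finset V, S.card = s → H.IsClique (S : Set V) → u ∈ S ∧ v ∈ S)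
    (hspan : ∀ w : V, w ≠ u → w ≠ v →
      ∃ S : Finset V, S.card = s ∧ H.IsClique (S : Set V) ∧ w ∈ S)
    (t : ℕ) (ht : t = {S : Finset V | S.card = s ∧ H.IsClique (S : Set V)}.ncard) :
    (t : ℚ) ≤ (((Fintype.card V : ℚ) - 2) / ((s : ℚ) - 2)) ^ (s - 2) := by
  classical
  have huvne : u ≠ v := huv.ne
  set r := s - 2 with hrdef
  have hr : 0 < r := by omega
  have hadj : ∀ w, w ≠ u → w ≠ v → H.Adj u w ∧ H.Adj v w := by
    intro w hwu hwv
    obtain ⟨S, hcard, hcl, hwS⟩ := hspan w hwu hwv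
    obtain ⟨huS, hvS⟩ := hcover S hcard hcl
    exact ⟨hcl (Finset.mem_coe.2 huS) (Finset.mem_coe.2 hwS) (Ne.symm hwu),
      hcl (Finset.mem_coe.2 hvS) (Finset.mem_coe.2 hwS) (Ne.symm hwv)⟩
  let G : SimpleGraph V := {
    Adj := fun a b => H.Adj a b ∧ a ≠ u ∧ a ≠ v ∧ b ≠ u ∧ b ≠ v
    symm := ⟨by rintro a b ⟨h1, h2, h3, h4, h5⟩; exact ⟨h1.symm, h4, h5, h2, h3⟩⟩
    loopless := ⟨fun a h => H.loopless.irrefl a h.1⟩ }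
  have hGfree : G.CliqueFree (r + 1) := by
    intro K hK
    have hKcard : K.card = r + 1 := hK.card_eq
    have hKne : ∀ w ∈ K, w ≠ u ∧ w ≠ v := by
      intro w hw
      obtain ⟨w', hw', hww'⟩ := Finset.exists_mem_ne (s := K) (by omega) w
      have hGadj : G.Adj w' w := hK.isClique (Finset.mem_coe.2 hw') (Finset.mem_coe.2 hw) hww'
      exact ⟨hGadj.2.2.2.1, hGadj.2.2.2.2⟩
    have huK : u ∉ K := fun h => (hKne u h).1 rfl
    have hins : (insert u K).card = s := by
      rw [Finset.card_insert_of_notMem huK]; omega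
    have hclins : H.IsClique ↑(insert u K) := by
      rw [Finset.coe_insert, SimpleGraph.isClique_iff]
      haveI := H.symm; rw [Set.pairwise_insert_of_symmetric]
      constructor
      · intro a ha b hb hab
        exact (hK.isClique ha hb hab).1
      · intro b hb hub
        exact ((hadj b (fun h => (hKne b hb).1 h) (fun h => (hKne b hb).2 h)).1)
    obtain ⟨-, hvmem⟩ := hcover _ hins hclins
    rcases Finset.mem_insert.1 hvmem with h | h
    · exact huvne h.symm
    · exact (hKne v h).2 rfl
  -- t as a Finset card
  set A : Finset (Finset V) :=
    Finset.univ.filter (fun S => S.card = s ∧ H.IsClique (S : Set V)) with hA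
  have htA : t = A.card := by
    rw [ht]
    have hset : {S : Finset V | S.card = s ∧ H.IsClique (S : Set V)} = ↑A := by
      ext S; simp [hA]
    rw [hset, Set.ncard_coe_finset]
  have hmemA : ∀ S ∈ A, S.card = s ∧ H.IsClique (S : Set V) ∧ u ∈ S ∧ v ∈ S := by
    intro S hS
    obtain ⟨-, hc, hcl⟩ := Finset.mem_filter.1 hS
    obtain ⟨h1, h2⟩ := hcover S hc hcl
    exact ⟨hc, hcl, h1, h2⟩
  -- reconstruction
  have hrecon : ∀ S : Finset V, S ∈ A → insert u (insert v ((S.erase u).erase v)) = S := by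
    intro S hS
    obtain ⟨-, -, huS, hvS⟩ := hmemA S hS
    have hvS' : v ∈ S.erase u := Finset.mem_erase.2 ⟨Ne.symm huvne, hvS⟩
    rw [Finset.insert_erase hvS', Finset.insert_erase huS]
  set B := A.image (fun S : Finset V => (S.erase u).erase v) with hB
  have hinj : Set.InjOn (fun S : Finset V => (S.erase u).erase v) ↑A := by
    intro S1 h1 S2 h2 he
    have := hrecon S1 (Finset.mem_coe.1 h1)
    rw [← hrecon S1 (Finset.mem_coe.1 h1), ← hrecon S2 (Finset.mem_coe.1 h2)]
    simp only at he
    rw [he]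
  have hBcard : B.card = A.card := Finset.card_image_of_injOn hinj
  have hBsub : ∀ S' ∈ B, S' ∈ G.cliqueFinset r ∧ u ∉ S' ∧ v ∉ S' := by
    intro S' hS'
    obtain ⟨S, hS, rfl⟩ := Finset.mem_image.1 hS'
    obtain ⟨hc, hcl, huS, hvS⟩ := hmemA S hS
    have hu' : u ∉ (S.erase u).erase v := fun h =>
      (Finset.mem_erase.1 (Finset.mem_of_mem_erase h)).1 rfl
    have hv' : v ∉ (S.erase u).erase v := fun h => (Finset.mem_erase.1 h).1 rfl
    refine ⟨SimpleGraph.mem_cliqueFinset_iff.2 ⟨?_, ?_⟩, hu', hv'⟩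
    · intro a ha b hb hab
      have haS := Finset.mem_coe.1 ha
      have hbS := Finset.mem_coe.1 hb
      have hau : a ≠ u := fun h => hu' (h ▸ haS)
      have hav : a ≠ v := fun h => hv' (h ▸ haS)
      have hbu : b ≠ u := fun h => hu' (h ▸ hbS)
      have hbv : b ≠ v := fun h => hv' (h ▸ hbS)
      have haS' : a ∈ S := Finset.mem_of_mem_erase (Finset.mem_of_mem_erase haS)
      have hbS' : b ∈ S := Finset.mem_of_mem_erase (Finset.mem_of_mem_erase hbS)
      exact ⟨hcl (Finset.mem_coe.2 haS') (Finset.mem_coe.2 hbS') hab, hau, hav, hbu, hbv⟩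
    · have hvS' : v ∈ S.erase u := Finset.mem_erase.2 ⟨Ne.symm huvne, hvS⟩
      rw [Finset.card_erase_of_mem hvS', Finset.card_erase_of_mem huS, hc]
      omega
  -- weights: indicator of V \ {u, v}
  set x : V → ℝ := fun w => if w = u ∨ w = v then 0 else 1 with hxdef
  have hxnn : ∀ w, 0 ≤ x w := by
    intro w
    by_cases h : w = u ∨ w = v <;> simp [hxdef, h]
  have hm2 : 2 ≤ Fintype.card V :=
    Fintype.one_lt_card_iff_nontrivial.2 ⟨u, v, huvne⟩
  have hfilter : (Finset.univ.filter (fun w => ¬(w = u ∨ w = v))).card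
      = Fintype.card V - 2 := by
    have he : Finset.univ.filter (fun w => ¬(w = u ∨ w = v))
        = Finset.univ \ {u, v} := by
      ext w; simp [not_or]
    rw [he, Finset.card_sdiff_of_subset (Finset.subset_univ _), Finset.card_univ]
    have : ({u, v} : Finset V).card = 2 := by
      rw [Finset.card_insert_of_notMem (by simp [huvne]), Finset.card_singleton]
    rw [this]
  have hsumx : ∑ w, x w = ((Fintype.card V - 2 : ℕ) : ℝ) := by
    rw [hxdef]
    rw [Finset.sum_ite, Finset.sum_const, Finset.sum_const, smul_zero, zero_add,
      nsmul_eq_mul, mul_one, hfilter]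
  have hcount : (B.card : ℝ) ≤ ∑ S ∈ G.cliqueFinset r, ∏ w ∈ S, x w := by
    have heq : ∀ S ∈ B, (∏ w ∈ S, x w) = 1 := by
      intro S hS
      refine Finset.prod_eq_one fun w hw => ?_
      obtain ⟨-, hu', hv'⟩ := hBsub S hS
      have hwu : w ≠ u := fun h => hu' (h ▸ hw)
      have hwv : w ≠ v := fun h => hv' (h ▸ hw)
      simp [hxdef, hwu, hwv]
    calc (B.card : ℝ) = ∑ S ∈ B, ∏ w ∈ S, x w := by
          rw [Finset.sum_congr rfl heq, Finset.sum_const, nsmul_eq_mul, mul_one]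
      _ ≤ ∑ S ∈ G.cliqueFinset r, ∏ w ∈ S, x w :=
          Finset.sum_le_sum_of_subset_of_nonneg (fun S hS => (hBsub S hS).1)
            (fun S _ _ => Finset.prod_nonneg fun w _ => hxnn w)
  have hcore := core G r hr hGfree (Fintype.card V) x hxnn
    ((Finset.card_filter_le _ _).trans (le_of_eq Finset.card_univ))
  rw [hsumx] at hcore
  have hreal : (t : ℝ) ≤ (((Fintype.card V - 2 : ℕ) : ℝ) / (r : ℝ)) ^ r := by
    rw [htA, ← hBcard]
    exact le_trans hcount hcore
  have hnat : t * r ^ r ≤ (Fintype.card V - 2) ^ r := by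
    have hrpos : (0 : ℝ) < (r : ℝ) ^ r := by
      have : (0:ℝ) < (r:ℝ) := by exact_mod_cast hr
      positivity
    rw [div_pow] at hreal
    have h1 := (le_div_iff₀ hrpos).1 hreal
    exact_mod_cast h1
  have hsq : ((s : ℚ) - 2) = (r : ℚ) := by
    rw [hrdef]
    push_cast [Nat.cast_sub (by omega : 2 ≤ s)]
    ring
  have hmq : ((Fintype.card V : ℚ) - 2) = ((Fintype.card V - 2 : ℕ) : ℚ) := by
    push_cast [Nat.cast_sub hm2]
    ring
  rw [hsq, hmq, div_pow, le_div_iff₀ (by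
    have : (0:ℚ) < (r:ℚ) := by exact_mod_cast hr
    positivity)]
  exact_mod_cast hnat
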